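/- Let 𝒜 be a finite set with at least two elements and suppose Pr(A = a) > 0 for every a ∈ 𝒜. Assume: (1) for every a ∈ 𝒜 and every measurable S ⊆ 𝒳 with Pr(X ∈ S | A = a) > 0, almost surely Pr(X_a ∈ S or A = a | X) > 0; and (2) for every a ∈ 𝒜 and ε > 0 there exists δ > 0 such that for every measurable S with Pr(X ∈ S | A = a) < δ, almost surely Pr(X_a ∈ S and A ≠ a | X) < ε. Then every Π-fair policy d is almost surely constant: there exists p ∈ [0,1] with d(X) = p almost surely. -/

import Mathlib

open MeasureTheory Filter

/-- (Continuous version of Theorem on path-specific fairness.) Under the two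
regularity conditions on the counterfactual covariates, every Π-fair policy is a.s. constant. -/
theorem pi_fair_policy_constant
    {Ω 𝒳 𝒜 : Type*} [MeasurableSpace Ω] [MeasurableSpace 𝒳]
    [MeasurableSpace 𝒜] [MeasurableSingletonClass 𝒜] [Fintype 𝒜]
    (P : Measure Ω) [IsProbabilityMeasure P]
    (X : Ω → 𝒳) (hX : Measurable X)
    (α : 𝒳 → 𝒜) (hα : Measurable α)
    -- `𝒜` has at least two elements, and every group has positive probability
    (htwo : 1 < Fintype.card 𝒜)
    (hpos : ∀ a : 𝒜, 0 < P {ω | α (X ω) = a})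
    -- the counterfactual covariates `X_a`, which agree with `X` on `{A = a}`
    (Xc : 𝒜 → Ω → 𝒳) (hXc : ∀ a, Measurable (Xc a))
    (hconsist : ∀ a : 𝒜, ∀ᵐ ω ∂P, α (X ω) = a → Xc a ω = X ω)
    -- condition (1)
    (h1 : ∀ a : 𝒜, ∀ S : Set 𝒳, MeasurableSet S →
      0 < P ({ω | X ω ∈ S} ∩ {ω | α (X ω) = a}) →
      ∀ᵐ ω ∂P,
        0 < (P[({ω | Xc a ω ∈ S ∨ α (X ω) = a}).indicator (fun _ => (1 : ℝ)) |
              MeasurableSpace.comap X inferInstance]) ω)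
    -- condition (2)
    (h2 : ∀ a : 𝒜, ∀ ε : ℝ, 0 < ε → ∃ δ : ℝ, 0 < δ ∧
      ∀ S : Set 𝒳, MeasurableSet S →
        (P ({ω | X ω ∈ S} ∩ {ω | α (X ω) = a})).toReal
            / (P {ω | α (X ω) = a}).toReal < δ →
        ∀ᵐ ω ∂P,
          (P[({ω | Xc a ω ∈ S ∧ α (X ω) ≠ a}).indicator (fun _ => (1 : ℝ)) |
              MeasurableSpace.comap X inferInstance]) ω < ε)
    -- `d` is a Π-fair policy (with `W = X`)
    (d : 𝒳 → ℝ) (hd : Measurable d) (hd01 : ∀ x, d x ∈ Set.Icc (0 : ℝ) 1)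
    (hfair : ∀ a : 𝒜,
      P[fun ω => d (Xc a ω) | MeasurableSpace.comap X inferInstance]
        =ᵐ[P] fun ω => d (X ω)) :
    ∃ p : ℝ, p ∈ Set.Icc (0 : ℝ) 1 ∧ ∀ᵐ ω ∂P, d (X ω) = p := by
  classical
  have hm' : MeasurableSpace.comap X inferInstance ≤ (inferInstance : MeasurableSpace Ω) :=
    hX.comap_le
  -- basic integrability facts
  have hfint : ∀ c, Integrable (fun ω => d (Xc c ω)) P := by
    intro c
    refine (integrable_const (1 : ℝ)).mono' ((hd.comp (hXc c)).aestronglyMeasurable) ?_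
    refine Eventually.of_forall fun ω => ?_
    rw [Real.norm_eq_abs, abs_of_nonneg (hd01 _).1]
    exact (hd01 _).2
  have hZint : Integrable (fun ω => d (X ω)) P := by
    refine (integrable_const (1 : ℝ)).mono' ((hd.comp hX).aestronglyMeasurable) ?_
    refine Eventually.of_forall fun ω => ?_
    rw [Real.norm_eq_abs, abs_of_nonneg (hd01 _).1]
    exact (hd01 _).2
  have hind : ∀ K : Set Ω, MeasurableSet K → Integrable (K.indicator fun _ => (1 : ℝ)) P :=
    fun K hK => (integrable_const 1).indicator hK
  have hAmeas' : ∀ c : 𝒜, MeasurableSet[(MeasurableSpace.comap X inferInstance)] {ω | α (X ω) = c} := fun c =>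
    ⟨α ⁻¹' {c}, hα (measurableSet_singleton c), rfl⟩
  have hAmeas : ∀ c : 𝒜, MeasurableSet {ω | α (X ω) = c} := fun c => hm' _ (hAmeas' c)
  have hPA : ∀ c : 𝒜, 0 < (P {ω | α (X ω) = c}).toReal := fun c =>
    ENNReal.toReal_pos (hpos c).ne' (measure_ne_top _ _)
  -- if the conditional expectation of the indicator of `K` is a.e. ≤ 0 then `K` is null
  have meas_zero : ∀ K : Set Ω, MeasurableSet K →
      (∀ᵐ ω ∂P, (P[K.indicator (fun _ => (1 : ℝ)) | (MeasurableSpace.comap X inferInstance)]) ω ≤ 0) → P K = 0 := by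
    intro K hK h
    have hnn : 0 ≤ᵐ[P] P[K.indicator (fun _ => (1 : ℝ)) | (MeasurableSpace.comap X inferInstance)] :=
      condExp_nonneg (Eventually.of_forall fun ω =>
        Set.indicator_nonneg (fun _ _ => zero_le_one) ω)
    have h0 : P[K.indicator (fun _ => (1 : ℝ)) | (MeasurableSpace.comap X inferInstance)] =ᵐ[P] 0 := by
      filter_upwards [h, hnn] with ω h1 h2
      exact le_antisymm h1 h2
    have hint : ∫ ω, K.indicator (fun _ => (1 : ℝ)) ω ∂P = 0 := by
      rw [← integral_condExp hm', integral_congr_ae h0]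
      simp
    rw [integral_indicator_const (1 : ℝ) hK, smul_eq_mul, mul_one] at hint
    rcases (ENNReal.toReal_eq_zero_iff _).1 hint with h' | h'
    · exact h'
    · exact absurd h' (measure_ne_top _ _)
  -- from "for all ε > 0 eventually < ε" to "eventually ≤ 0"
  have small_to_zero : ∀ f : Ω → ℝ,
      (∀ ε : ℝ, 0 < ε → ∀ᵐ ω ∂P, f ω < ε) → ∀ᵐ ω ∂P, f ω ≤ 0 := by
    intro f h
    have h' : ∀ᵐ ω ∂P, ∀ n : ℕ, f ω < 1 / (n + 1) := by
      rw [ae_all_iff]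
      intro n
      exact h _ (by positivity)
    filter_upwards [h'] with ω hω
    by_contra hc
    push_neg at hc
    obtain ⟨n, hn⟩ := exists_nat_one_div_lt hc
    exact lt_asymm (hω n) hn
  -- null transfer: if `{X ∈ S} ∩ {A = c}` is null, then `{X_c ∈ S}` is null
  have null_transfer : ∀ (c : 𝒜) (S : Set 𝒳), MeasurableSet S →
      P ({ω | X ω ∈ S} ∩ {ω | α (X ω) = c}) = 0 → P {ω | Xc c ω ∈ S} = 0 := by
    intro c S hS h0
    have hKset : MeasurableSet {ω | Xc c ω ∈ S ∧ α (X ω) ≠ c} :=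
      ((hXc c) hS).inter ((hAmeas c).compl)
    have hsmall : ∀ ε : ℝ, 0 < ε → ∀ᵐ ω ∂P,
        (P[({ω | Xc c ω ∈ S ∧ α (X ω) ≠ c}).indicator (fun _ => (1 : ℝ)) | (MeasurableSpace.comap X inferInstance)]) ω < ε := by
      intro ε hε
      obtain ⟨δ, hδ, H⟩ := h2 c ε hε
      refine H S hS ?_
      rw [h0]
      simpa using hδ
    have hzero : P {ω | Xc c ω ∈ S ∧ α (X ω) ≠ c} = 0 :=
      meas_zero _ hKset (small_to_zero _ hsmall)
    have hcons0 : P {ω | ¬(α (X ω) = c → Xc c ω = X ω)} = 0 := by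
      have := hconsist c
      rwa [ae_iff] at this
    have hsub : {ω | Xc c ω ∈ S} ⊆ {ω | Xc c ω ∈ S ∧ α (X ω) ≠ c} ∪
        (({ω | X ω ∈ S} ∩ {ω | α (X ω) = c}) ∪ {ω | ¬(α (X ω) = c → Xc c ω = X ω)}) := by
      intro ω hω
      by_cases hc : α (X ω) = c
      · by_cases hcons : Xc c ω = X ω
        · refine Or.inr (Or.inl ⟨?_, hc⟩)
          show X ω ∈ S
          rw [← hcons]
          exact hω
        · exact Or.inr (Or.inr fun h => hcons (h hc))
      · exact Or.inl ⟨hω, hc⟩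
    exact measure_mono_null hsub
      (measure_union_null hzero (measure_union_null h0 hcons0))
  -- the essential infimum `m`
  set lo : Set ℝ := {t : ℝ | P {ω | d (X ω) ≤ t} ≠ 0} with hlodef
  have hlo1 : (1 : ℝ) ∈ lo := by
    have huniv : {ω | d (X ω) ≤ (1 : ℝ)} = Set.univ :=
      Set.eq_univ_of_forall fun ω => (hd01 _).2
    simp only [hlodef, Set.mem_setOf_eq, huniv, measure_univ]
    exact one_ne_zero
  have hlo_nonneg : ∀ t ∈ lo, (0 : ℝ) ≤ t := by
    intro t ht
    by_contra hlt
    push_neg at hlt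
    have hempty : {ω | d (X ω) ≤ t} = ∅ := by
      ext ω
      simp only [Set.mem_setOf_eq, Set.mem_empty_iff_false, iff_false, not_le]
      exact lt_of_lt_of_le hlt (hd01 _).1
    rw [hlodef] at ht
    simp only [Set.mem_setOf_eq, hempty, measure_empty] at ht
    exact ht rfl
  have hlobdd : BddBelow lo := ⟨0, hlo_nonneg⟩
  set m : ℝ := sInf lo with hmdef
  have hm0 : 0 ≤ m := le_csInf ⟨1, hlo1⟩ hlo_nonneg
  have hm1 : m ≤ 1 := csInf_le hlobdd hlo1
  have hlow : ∀ θ : ℝ, 0 < θ → P {ω | d (X ω) < m + θ} ≠ 0 := by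
    intro θ hθ
    obtain ⟨t, htlo, htlt⟩ := exists_lt_of_csInf_lt ⟨1, hlo1⟩ (by linarith : m < m + θ)
    intro h0
    exact htlo (measure_mono_null
      (fun ω (hω : d (X ω) ≤ t) => lt_of_le_of_lt hω htlt) h0)
  have hbelow : P {ω | d (X ω) < m} = 0 := by
    have hcover : {ω | d (X ω) < m} ⊆ ⋃ n : ℕ, {ω | d (X ω) ≤ m - 1 / (n + 1)} := by
      intro ω hω
      have hω' : d (X ω) < m := hω
      obtain ⟨n, hn⟩ := exists_nat_one_div_lt (ε := m - d (X ω)) (by linarith)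
      refine Set.mem_iUnion.2 ⟨n, ?_⟩
      simp only [Set.mem_setOf_eq]
      linarith
    refine measure_mono_null hcover (measure_iUnion_null fun n => ?_)
    by_contra h0
    have hmem : m - 1 / (n + 1) ∈ lo := h0
    have hle := csInf_le hlobdd hmem
    have hposn : (0 : ℝ) < 1 / ((n : ℝ) + 1) := by positivity
    rw [← hmdef] at hle
    linarith
  -- the essential supremum `M`
  set hi : Set ℝ := {t : ℝ | P {ω | t ≤ d (X ω)} ≠ 0} with hhidef
  have hhi0 : (0 : ℝ) ∈ hi := by
    have huniv : {ω | (0 : ℝ) ≤ d (X ω)} = Set.univ :=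
      Set.eq_univ_of_forall fun ω => (hd01 _).1
    simp only [hhidef, Set.mem_setOf_eq, huniv, measure_univ]
    exact one_ne_zero
  have hhi_le1 : ∀ t ∈ hi, t ≤ 1 := by
    intro t ht
    by_contra hlt
    push_neg at hlt
    have hempty : {ω | t ≤ d (X ω)} = ∅ := by
      ext ω
      simp only [Set.mem_setOf_eq, Set.mem_empty_iff_false, iff_false, not_le]
      exact lt_of_le_of_lt (hd01 _).2 hlt
    rw [hhidef] at ht
    simp only [Set.mem_setOf_eq, hempty, measure_empty] at ht
    exact ht rfl
  have hhibdd : BddAbove hi := ⟨1, hhi_le1⟩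
  set M : ℝ := sSup hi with hMdef
  have habove : P {ω | M < d (X ω)} = 0 := by
    have hcover : {ω | M < d (X ω)} ⊆ ⋃ n : ℕ, {ω | M + 1 / (n + 1) ≤ d (X ω)} := by
      intro ω hω
      have hω' : M < d (X ω) := hω
      obtain ⟨n, hn⟩ := exists_nat_one_div_lt (ε := d (X ω) - M) (by linarith)
      refine Set.mem_iUnion.2 ⟨n, ?_⟩
      simp only [Set.mem_setOf_eq]
      linarith
    refine measure_mono_null hcover (measure_iUnion_null fun n => ?_)
    by_contra h0
    have hmem : M + 1 / (n + 1) ∈ hi := h0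
    have hle := le_csSup hhibdd hmem
    have hposn : (0 : ℝ) < 1 / ((n : ℝ) + 1) := by positivity
    rw [← hMdef] at hle
    linarith
  have hhigh : ∀ θ : ℝ, 0 < θ → P {ω | M - θ < d (X ω)} ≠ 0 := by
    intro θ hθ
    obtain ⟨t, hthi, htlt⟩ := exists_lt_of_lt_csSup ⟨0, hhi0⟩ (by linarith : M - θ < M)
    intro h0
    exact hthi (measure_mono_null
      (fun ω (hω : t ≤ d (X ω)) => lt_of_lt_of_le htlt hω) h0)
  -- lower bound for the counterfactual policy values
  have hdXc_lb : ∀ c : 𝒜, ∀ᵐ ω ∂P, m ≤ d (Xc c ω) := by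
    intro c
    have hnull : P {ω | Xc c ω ∈ {x | d x < m}} = 0 := by
      refine null_transfer c _ (hd measurableSet_Iio) ?_
      exact measure_mono_null Set.inter_subset_left hbelow
    rw [ae_iff]
    simpa [not_le] using hnull
  -- main step: `m < M` is impossible
  have hfalse : ¬ m < M := by
    intro hmM
    by_cases hbot : P {ω | d (X ω) ≤ m} = 0
    · -- Case (c): the bottom is not attained
      obtain ⟨c₁, c₂, hc12⟩ := Fintype.one_lt_card_iff.1 htwo
      obtain ⟨δ₁, hδ₁, H₁⟩ := h2 c₁ (1 / 4) (by norm_num)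
      obtain ⟨δ₂, hδ₂, H₂⟩ := h2 c₂ (1 / 4) (by norm_num)
      set β : ℝ := min (δ₁ * (P {ω | α (X ω) = c₁}).toReal)
        (δ₂ * (P {ω | α (X ω) = c₂}).toReal) with hβdef
      have hβpos : 0 < β := lt_min (mul_pos hδ₁ (hPA c₁)) (mul_pos hδ₂ (hPA c₂))
      have hiter : ⋂ n : ℕ, {ω | d (X ω) < m + 1 / (n + 1)} = {ω | d (X ω) ≤ m} := by
        ext ω
        simp only [Set.mem_iInter, Set.mem_setOf_eq]
        constructor
        · intro h
          by_contra hc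
          push_neg at hc
          obtain ⟨n, hn⟩ := exists_nat_one_div_lt (sub_pos.2 hc)
          have := h n
          linarith
        · intro h n
          have : (0 : ℝ) < 1 / ((n : ℝ) + 1) := by positivity
          linarith
      have htend : Tendsto (fun n : ℕ => P {ω | d (X ω) < m + 1 / (n + 1)}) atTop
          (nhds (P {ω | d (X ω) ≤ m})) := by
        rw [← hiter]
        refine tendsto_measure_iInter_atTop
          (fun n => ((hd.comp hX) measurableSet_Iio).nullMeasurableSet) ?_
          ⟨0, measure_ne_top _ _⟩
        intro i j hij ω hω
        simp only [Set.mem_setOf_eq] at hω ⊢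
        have hle : 1 / ((j : ℝ) + 1) ≤ 1 / ((i : ℝ) + 1) := by
          apply one_div_le_one_div_of_le (by positivity)
          exact_mod_cast by omega
        linarith
      rw [hbot] at htend
      have hev : ∀ᶠ n : ℕ in atTop,
          P {ω | d (X ω) < m + 1 / (n + 1)} < ENNReal.ofReal β :=
        htend.eventually_lt_const (by simpa using ENNReal.ofReal_pos.2 hβpos)
      obtain ⟨n, hn⟩ := hev.exists
      set η : ℝ := 1 / (n + 1) with hηdef
      have hηpos : 0 < η := by positivity
      have hnR : (P {ω | d (X ω) < m + η}).toReal < β :=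
        ENNReal.toReal_lt_of_lt_ofReal hn
      have hratio : ∀ (c : 𝒜) (δc : ℝ),
          (P {ω | d (X ω) < m + η}).toReal < δc * (P {ω | α (X ω) = c}).toReal →
          (P ({ω | X ω ∈ {x | d x < m + η}} ∩ {ω | α (X ω) = c})).toReal
            / (P {ω | α (X ω) = c}).toReal < δc := by
        intro c δc hlt
        rw [div_lt_iff₀ (hPA c)]
        refine lt_of_le_of_lt ?_ hlt
        exact ENNReal.toReal_mono (measure_ne_top _ _)
          (measure_mono Set.inter_subset_left)
      have hcond1 : ∀ᵐ ω ∂P,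
          (P[({ω | Xc c₁ ω ∈ {x | d x < m + η} ∧ α (X ω) ≠ c₁}).indicator
            (fun _ => (1 : ℝ)) | (MeasurableSpace.comap X inferInstance)]) ω < 1 / 4 :=
        H₁ _ (hd measurableSet_Iio)
          (hratio c₁ δ₁ (lt_of_lt_of_le hnR (min_le_left _ _)))
      have hcond2 : ∀ᵐ ω ∂P,
          (P[({ω | Xc c₂ ω ∈ {x | d x < m + η} ∧ α (X ω) ≠ c₂}).indicator
            (fun _ => (1 : ℝ)) | (MeasurableSpace.comap X inferInstance)]) ω < 1 / 4 :=
        H₂ _ (hd measurableSet_Iio)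
          (hratio c₂ δ₂ (lt_of_lt_of_le hnR (min_le_right _ _)))
      -- the key concentration argument
      have key : ∀ c : 𝒜,
          (∀ᵐ ω ∂P, (P[({ω | Xc c ω ∈ {x | d x < m + η} ∧ α (X ω) ≠ c}).indicator
            (fun _ => (1 : ℝ)) | (MeasurableSpace.comap X inferInstance)]) ω < 1 / 4) →
          ∀ᵐ ω ∂P, d (X ω) < m + η / 4 → α (X ω) = c := by
        intro c hcond
        set B : Set 𝒳 := {x | d x < m + η} with hBdef
        have hB : MeasurableSet B := hd measurableSet_Iio
        set K : Set Ω := {ω | Xc c ω ∈ B} with hKdef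
        have hK : MeasurableSet K := (hXc c) hB
        set Kν : Set Ω := {ω | Xc c ω ∈ B ∧ α (X ω) ≠ c} with hKνdef
        have hKν : MeasurableSet Kν := hK.inter ((hAmeas c).compl)
        set g : Ω → ℝ := (fun _ => m) + η • (Kᶜ.indicator fun _ => (1 : ℝ)) with hgdef
        have hgint : Integrable g P :=
          (integrable_const m).add (Integrable.smul η (hind _ hK.compl))
        have hgf : g ≤ᵐ[P] fun ω => d (Xc c ω) := by
          filter_upwards [hdXc_lb c] with ω hω
          by_cases hmem : ω ∈ K
          · have hnotc : ω ∉ Kᶜ := Set.notMem_compl_iff.2 hmem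
            show m + η • (Kᶜ.indicator (fun _ => (1 : ℝ)) ω) ≤ d (Xc c ω)
            rw [Set.indicator_of_notMem hnotc, smul_zero, add_zero]
            exact hω
          · have hge : m + η ≤ d (Xc c ω) := not_lt.1 hmem
            have hmemc : ω ∈ Kᶜ := Set.mem_compl hmem
            show m + η • (Kᶜ.indicator (fun _ => (1 : ℝ)) ω) ≤ d (Xc c ω)
            rw [Set.indicator_of_mem hmemc, smul_eq_mul, mul_one]
            exact hge
        have hmono := condExp_mono (m := MeasurableSpace.comap X inferInstance) hgint (hfint c) hgf
        have hcondg : P[g|(MeasurableSpace.comap X inferInstance)] =ᵐ[P]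
            (fun _ => m) + η • P[Kᶜ.indicator (fun _ => (1 : ℝ))|(MeasurableSpace.comap X inferInstance)] := by
          refine (condExp_add (integrable_const m) (Integrable.smul η (hind _ hK.compl)) (MeasurableSpace.comap X inferInstance)).trans ?_
          refine EventuallyEq.add ?_ (condExp_smul η _ _)
          exact Eventually.of_forall fun ω => congrFun (condExp_const hm' m) ω
        have hIndSplit : Kᶜ.indicator (fun _ => (1 : ℝ)) =
            (fun _ => (1 : ℝ)) - K.indicator (fun _ => (1 : ℝ)) := by
          funext ω
          by_cases h : ω ∈ K
          · have : ω ∉ Kᶜ := Set.notMem_compl_iff.2 h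
            simp [Set.indicator_of_mem h, Set.indicator_of_notMem this]
          · simp [Set.indicator_of_mem (show ω ∈ Kᶜ from h), Set.indicator_of_notMem h]
        have hcondKc : P[Kᶜ.indicator (fun _ => (1 : ℝ))|(MeasurableSpace.comap X inferInstance)] =ᵐ[P]
            (fun _ => (1 : ℝ)) - P[K.indicator (fun _ => (1 : ℝ))|(MeasurableSpace.comap X inferInstance)] := by
          rw [hIndSplit]
          refine (condExp_sub (integrable_const 1) (hind _ hK) (MeasurableSpace.comap X inferInstance)).trans ?_
          exact EventuallyEq.sub
            (Eventually.of_forall fun ω => congrFun (condExp_const hm' 1) ω)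
            EventuallyEq.rfl
        have hptw : K.indicator (fun _ => (1 : ℝ)) ≤ᵐ[P]
            Kν.indicator (fun _ => (1 : ℝ)) +
              ({ω | α (X ω) = c}).indicator (fun _ => (1 : ℝ)) := by
          refine Eventually.of_forall fun ω => ?_
          show K.indicator (fun _ => (1 : ℝ)) ω ≤
            Kν.indicator (fun _ => (1 : ℝ)) ω +
              ({ω | α (X ω) = c}).indicator (fun _ => (1 : ℝ)) ω
          by_cases hk : ω ∈ K
          · rw [Set.indicator_of_mem hk]
            by_cases ha : α (X ω) = c
            · rw [Set.indicator_of_mem (show ω ∈ {ω | α (X ω) = c} from ha)]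
              have := Set.indicator_nonneg (s := Kν)
                (fun (_ : Ω) _ => (zero_le_one : (0:ℝ) ≤ 1)) ω
              linarith
            · rw [Set.indicator_of_mem (show ω ∈ Kν from ⟨hk, ha⟩)]
              have := Set.indicator_nonneg (s := {ω | α (X ω) = c})
                (fun (_ : Ω) _ => (zero_le_one : (0:ℝ) ≤ 1)) ω
              linarith
          · rw [Set.indicator_of_notMem hk]
            have h1' := Set.indicator_nonneg (s := Kν)
              (fun (_ : Ω) _ => (zero_le_one : (0:ℝ) ≤ 1)) ω
            have h2' := Set.indicator_nonneg (s := {ω | α (X ω) = c})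
              (fun (_ : Ω) _ => (zero_le_one : (0:ℝ) ≤ 1)) ω
            linarith
        have hcondK := condExp_mono (m := MeasurableSpace.comap X inferInstance) (hind _ hK)
          ((hind _ hKν).add (hind _ (hAmeas c))) hptw
        have hcondsum : P[Kν.indicator (fun _ => (1 : ℝ)) +
            ({ω | α (X ω) = c}).indicator (fun _ => (1 : ℝ))|(MeasurableSpace.comap X inferInstance)] =ᵐ[P]
            P[Kν.indicator (fun _ => (1 : ℝ))|(MeasurableSpace.comap X inferInstance)] +
              ({ω | α (X ω) = c}).indicator (fun _ => (1 : ℝ)) := by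
          refine (condExp_add (hind _ hKν) (hind _ (hAmeas c)) (MeasurableSpace.comap X inferInstance)).trans ?_
          refine EventuallyEq.add EventuallyEq.rfl ?_
          have hsm : StronglyMeasurable[(MeasurableSpace.comap X inferInstance)]
              (({ω | α (X ω) = c}).indicator (fun _ => (1 : ℝ))) :=
            (stronglyMeasurable_const (β := ℝ)).indicator (hAmeas' c)
          exact Eventually.of_forall fun ω =>
            congrFun (condExp_of_stronglyMeasurable hm' hsm (hind _ (hAmeas c))) ω
        filter_upwards [hfair c, hmono, hcondg, hcondKc, hcondK, hcondsum, hcond]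
          with ω hfe hmo hg hkc hk hsum hq hlt
        by_contra hne
        have hI : ({ω | α (X ω) = c}).indicator (fun _ => (1 : ℝ)) ω = 0 :=
          Set.indicator_of_notMem (show ω ∉ {ω | α (X ω) = c} from hne) _
        simp only [Pi.add_apply, Pi.smul_apply, Pi.sub_apply, smul_eq_mul] at hg hkc hsum
        set e1 : ℝ := (P[K.indicator (fun _ => (1 : ℝ))|(MeasurableSpace.comap X inferInstance)]) ω with he1
        set e2 : ℝ := (P[Kν.indicator (fun _ => (1 : ℝ))|(MeasurableSpace.comap X inferInstance)]) ω with he2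
        -- hk : e1 ≤ condexp of sum at ω; hsum : that = e2 + I
        rw [hsum] at hk
        rw [hI, add_zero] at hk
        -- hg : P[g|(MeasurableSpace.comap X inferInstance)] ω = m + η * P[Kᶜ.ind|(MeasurableSpace.comap X inferInstance)] ω ; hkc : P[Kᶜ.ind|(MeasurableSpace.comap X inferInstance)] ω = 1 - e1
        rw [hkc] at hg
        -- chain: d (X ω) = P[f|(MeasurableSpace.comap X inferInstance)] ω ≥ P[g|(MeasurableSpace.comap X inferInstance)] ω = m + η (1 - e1)
        have hchain : m + η * (1 - e1) ≤ d (X ω) := by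
          rw [← hfe, ← hg]
          exact hmo
        have he1q : e1 < 1 / 4 := lt_of_le_of_lt hk hq
        nlinarith [hηpos, hchain, hlt, he1q]
      have hk1 := key c₁ hcond1
      have hk2 := key c₂ hcond2
      have hnone : ∀ᵐ ω ∂P, ¬ d (X ω) < m + η / 4 := by
        filter_upwards [hk1, hk2] with ω k1 k2 hlt
        exact hc12 ((k1 hlt).symm.trans (k2 hlt))
      rw [ae_iff] at hnone
      refine hlow (η / 4) (by positivity) ?_
      simpa using hnone
    · -- Case (a): the bottom is attained with positive probability
      have hDm' : MeasurableSet[(MeasurableSpace.comap X inferInstance)] {ω | d (X ω) ≤ m} :=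
        ⟨{x | d x ≤ m}, hd measurableSet_Iic, rfl⟩
      have hD : MeasurableSet {ω | d (X ω) ≤ m} := hm' _ hDm'
      -- counterfactuals from the bottom stay in the bottom
      have hA1 : ∀ c : 𝒜, ∀ᵐ ω ∂P, d (X ω) ≤ m → d (Xc c ω) ≤ m := by
        intro c
        have hint1 : ∫ ω in {ω | d (X ω) ≤ m}, d (Xc c ω) ∂P
            = ∫ ω in {ω | d (X ω) ≤ m}, d (X ω) ∂P := by
          calc ∫ ω in {ω | d (X ω) ≤ m}, d (Xc c ω) ∂P
              = ∫ ω in {ω | d (X ω) ≤ m},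
                  (P[fun ω => d (Xc c ω)|(MeasurableSpace.comap X inferInstance)]) ω ∂P :=
                (setIntegral_condExp hm' (hfint c) hDm').symm
            _ = ∫ ω in {ω | d (X ω) ≤ m}, d (X ω) ∂P :=
                setIntegral_congr_ae hD ((hfair c).mono fun ω h _ => h)
        have hle : ∫ ω in {ω | d (X ω) ≤ m}, d (X ω) ∂P
            ≤ m * (P {ω | d (X ω) ≤ m}).toReal := by
          have hmon := setIntegral_mono_on hZint.integrableOn
            (integrable_const m).integrableOn hD (fun ω hω => hω)
          rwa [setIntegral_const, smul_eq_mul, mul_comm] at hmon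
        have hnn : 0 ≤ᵐ[P.restrict {ω | d (X ω) ≤ m}] fun ω => d (Xc c ω) - m :=
          ae_restrict_of_ae ((hdXc_lb c).mono fun ω h => sub_nonneg.2 h)
        have hsubint : ∫ ω in {ω | d (X ω) ≤ m}, (d (Xc c ω) - m) ∂P
            = ∫ ω in {ω | d (X ω) ≤ m}, d (Xc c ω) ∂P
              - m * (P {ω | d (X ω) ≤ m}).toReal := by
          rw [integral_sub ((hfint c).restrict) ((integrable_const m).restrict),
            setIntegral_const, smul_eq_mul, mul_comm, Measure.real]
        have hzero2 : ∫ ω in {ω | d (X ω) ≤ m}, (d (Xc c ω) - m) ∂P = 0 := by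
          have hge : 0 ≤ ∫ ω in {ω | d (X ω) ≤ m}, (d (Xc c ω) - m) ∂P :=
            integral_nonneg_of_ae hnn
          have hle2 : ∫ ω in {ω | d (X ω) ≤ m}, (d (Xc c ω) - m) ∂P ≤ 0 := by
            rw [hsubint, hint1]
            linarith
          linarith
        have haezero : (fun ω => d (Xc c ω) - m)
            =ᵐ[P.restrict {ω | d (X ω) ≤ m}] 0 :=
          (integral_eq_zero_iff_of_nonneg_ae hnn
            (((hfint c).sub (integrable_const m)).restrict)).1 hzero2
        have := (ae_restrict_iff' hD).1 haezero
        filter_upwards [this] with ω hω hmem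
        have h0 := hω hmem
        simp only [Pi.zero_apply] at h0
        linarith
      have hTcpos : P {ω | m < d (X ω)} ≠ 0 := by
        have := hhigh (M - m) (by linarith)
        have heq : {ω | M - (M - m) < d (X ω)} = {ω | m < d (X ω)} := by
          ext ω; simp only [Set.mem_setOf_eq]; constructor <;> intro h <;> linarith
        rwa [heq] at this
      have hexb : ∃ b : 𝒜,
          P ({ω | X ω ∈ {x | m < d x}} ∩ {ω | α (X ω) = b}) ≠ 0 := by
        by_contra h
        push_neg at h
        refine hTcpos (measure_mono_null ?_ (measure_iUnion_null h))
        intro ω hω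
        exact Set.mem_iUnion.2 ⟨α (X ω), ⟨hω, rfl⟩⟩
      obtain ⟨b, hb⟩ := hexb
      -- key: bottom points must lie in group `b'` whenever group `b'` has mass above `m`
      have hkey : ∀ b' : 𝒜,
          P ({ω | X ω ∈ {x | m < d x}} ∩ {ω | α (X ω) = b'}) ≠ 0 →
          ∀ᵐ ω ∂P, d (X ω) ≤ m → α (X ω) = b' := by
        intro b' hbpos
        have hcond := h1 b' {x | m < d x} (hd measurableSet_Ioi)
          (pos_iff_ne_zero.2 hbpos)
        set D' : Set Ω := {ω | d (X ω) ≤ m} ∩ {ω | α (X ω) = b'}ᶜ with hD'def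
        have hD'm' : MeasurableSet[(MeasurableSpace.comap X inferInstance)] D' := hDm'.inter ((hAmeas' b').compl)
        have hD' : MeasurableSet D' := hm' _ hD'm'
        set L : Set Ω := {ω | Xc b' ω ∈ {x | m < d x} ∨ α (X ω) = b'} with hLdef
        have hL : MeasurableSet L :=
          ((hXc b') (hd measurableSet_Ioi)).union (hAmeas b')
        have hint2 : ∫ ω in D', (P[L.indicator (fun _ => (1 : ℝ))|(MeasurableSpace.comap X inferInstance)]) ω ∂P
            = (P (L ∩ D')).toReal := by
          rw [setIntegral_condExp hm' (hind _ hL) hD'm',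
            integral_indicator_const (1 : ℝ) hL, measureReal_restrict_apply hL,
            smul_eq_mul, mul_one, Measure.real]
        have hLD' : P (L ∩ D') = 0 := by
          have hae := hA1 b'
          rw [ae_iff] at hae
          refine measure_mono_null ?_ hae
          rintro ω ⟨hLω, hDω, hAω⟩
          have hXcb : Xc b' ω ∈ {x | m < d x} := by
            rcases hLω with h | h
            · exact h
            · exact absurd h hAω
          intro himp
          exact absurd (himp hDω) (not_le.2 hXcb)
        have hnn' : 0 ≤ᵐ[P.restrict D'] P[L.indicator (fun _ => (1 : ℝ))|(MeasurableSpace.comap X inferInstance)] :=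
          ae_restrict_of_ae (condExp_nonneg (Eventually.of_forall fun ω =>
            Set.indicator_nonneg (fun _ _ => zero_le_one) ω))
        have hzero3 : P[L.indicator (fun _ => (1 : ℝ))|(MeasurableSpace.comap X inferInstance)] =ᵐ[P.restrict D'] 0 := by
          refine (integral_eq_zero_iff_of_nonneg_ae hnn'
            (integrable_condExp.restrict)).1 ?_
          rw [hint2, hLD']
          simp
        have h0' := (ae_restrict_iff' hD').1 hzero3
        have hnotD' : ∀ᵐ ω ∂P, ω ∉ D' := by
          filter_upwards [h0', hcond] with ω hz hc hmem
          have := hz hmem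
          simp only [Pi.zero_apply] at this
          exact absurd this (ne_of_gt hc)
        filter_upwards [hnotD'] with ω hω hd'
        by_contra hno
        exact hω ⟨hd', hno⟩
      by_cases hsec : ∃ c : 𝒜, c ≠ b ∧
          P ({ω | X ω ∈ {x | m < d x}} ∩ {ω | α (X ω) = c}) ≠ 0
      · obtain ⟨c, hcb, hc⟩ := hsec
        have h1' := hkey b hb
        have h2' := hkey c hc
        have : ∀ᵐ ω ∂P, ¬ d (X ω) ≤ m := by
          filter_upwards [h1', h2'] with ω k1 k2 hle
          exact hcb ((k2 hle).symm.trans (k1 hle))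
        rw [ae_iff] at this
        exact hbot (by simpa using this)
      · push_neg at hsec
        obtain ⟨c, hcb⟩ := Fintype.exists_ne_of_one_lt_card htwo b
        have hc0 : P ({ω | X ω ∈ {x | m < d x}} ∩ {ω | α (X ω) = c}) = 0 :=
          hsec c hcb
        have hnull := null_transfer c _ (hd measurableSet_Ioi) hc0
        have hub : ∀ᵐ ω ∂P, d (Xc c ω) ≤ m := by
          rw [ae_iff]
          simpa [not_le] using hnull
        have hcm := condExp_mono (m := MeasurableSpace.comap X inferInstance) (hfint c) (integrable_const m) hub
        have hZle : ∀ᵐ ω ∂P, d (X ω) ≤ m := by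
          filter_upwards [hcm, hfair c] with ω hle heq
          rw [← heq]
          calc (P[fun ω => d (Xc c ω)|(MeasurableSpace.comap X inferInstance)]) ω
              ≤ (P[fun _ => m|(MeasurableSpace.comap X inferInstance)]) ω := hle
            _ = m := congrFun (condExp_const hm' m) ω
        rw [ae_iff] at hZle
        exact hTcpos (by simpa [not_le] using hZle)
  -- conclude: `m = M` and `d (X ω) = m` a.s.
  have hmleM : m ≤ M := by
    by_contra h
    push_neg at h
    have hae : ∀ᵐ ω ∂P, ¬ d (X ω) < m := by
      rw [ae_iff]; simpa using hbelow
    have hae2 : ∀ᵐ ω ∂P, ¬ M < d (X ω) := by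
      rw [ae_iff]; simpa using habove
    have hne : (ae P).NeBot := ae_neBot.2 (IsProbabilityMeasure.ne_zero P)
    obtain ⟨ω, h1', h2'⟩ := (hae.and hae2).exists
    push_neg at h1' h2'
    linarith
  have hEq : m = M := le_antisymm hmleM (not_lt.1 hfalse)
  refine ⟨m, ⟨hm0, hm1⟩, ?_⟩
  have hae : ∀ᵐ ω ∂P, ¬ d (X ω) < m := by
    rw [ae_iff]; simpa using hbelow
  have hae2 : ∀ᵐ ω ∂P, ¬ M < d (X ω) := by
    rw [ae_iff]; simpa using habove
  filter_upwards [hae, hae2] with ω h1' h2'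
  push_neg at h1' h2'
  rw [← hEq] at h2'
  linarith
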